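/- arXiv:0708.3244 — 2 statements merged into one kernel-verified Lean document; each statement's English description precedes it below -/
import Mathlib

section
/- (Proposition 2, achievability of preventing consensus.) Let x(0) be an ordered initial profile, μ ∈ (0, 1/2], and define D_k := (1/(n−k))·Σ_{i=k+1}^n x_i(0) − (1/k)·Σ_{j=1}^k x_j(0) for k ∈ {1,…,n−1}. Fix k with D_k = max_{k'} D_{k'} and suppose ε < D_k and that within each subgroup {1,…,k} and {k+1,…,n} the phone-chain consensus condition holds (ε exceeds the corresponding quantity max_i Σ_{j=0}^{i−1} μ^j·Δ(0) computed from the gaps of the subgroup's initial opinions). Then there exist a communication regime and a time T ∈ ℕ such that min_{j>k} x_j(T) − max_{j≤k} x_j(T) ≥ ε; consequently, no matter how the communication regime is chosen after time T, the process never reaches consensus. -/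
open Filter

/-- One step of the Weisbuch–Deffuant update applied by agents `i` and `j`. -/
noncomputable def wdStep {n : ℕ} (ε μ : ℝ) (i j : Fin n) (x : Fin n → ℝ) : Fin n → ℝ :=
  if |x i - x j| < ε then
    Function.update (Function.update x i ((1 - μ) * x i + μ * x j)) j
      (μ * x i + (1 - μ) * x j)
  else x

/-- Trajectory of the WD model under a communication regime. -/
noncomputable def wdTraj {n : ℕ} (ε μ : ℝ) (regime : ℕ → Fin n × Fin n)
    (x0 : Fin n → ℝ) : ℕ → Fin n → ℝ
  | 0 => x0
  | t + 1 => wdStep ε μ (regime t).1 (regime t).2 (wdTraj ε μ regime x0 t)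

/-- Gap between the opinions of agents `i+1` and `i` (0-based). -/
def gap {n : ℕ} (x : Fin n → ℝ) (i : Fin (n - 1)) : ℝ :=
  x ⟨(i : ℕ) + 1, by have := i.isLt; omega⟩ - x ⟨(i : ℕ), by have := i.isLt; omega⟩

/-- Maximal gap of a profile. -/
noncomputable def maxGap {n : ℕ} (x : Fin n → ℝ) : ℝ := ⨆ i : Fin (n - 1), gap x i

/-- The phone chain of closest: at step `t` the pair (0-based) is
`(t mod (n-1), t mod (n-1) + 1)`. -/
def phoneChain (n : ℕ) (hn : 2 ≤ n) (t : ℕ) : Fin n × Fin n :=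
  (⟨t % (n - 1), by have := Nat.mod_lt t (show 0 < n - 1 by omega); omega⟩,
   ⟨t % (n - 1) + 1, by have := Nat.mod_lt t (show 0 < n - 1 by omega); omega⟩)

/-- `chainBound μ x0 i` is `Σ_{j=0}^{i} μ^j · Δx_{i-j}` (0-based), the paper's
`Σ_{j=0}^{i-1} μ^j Δx_{i-j}(0)` for the 1-based index `i+1`. -/
noncomputable def chainBound {n : ℕ} (μ : ℝ) (x0 : Fin n → ℝ) (i : Fin (n - 1)) : ℝ :=
  ∑ j ∈ Finset.range ((i : ℕ) + 1), μ ^ j * gap x0 ⟨(i : ℕ) - j, by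
    have := i.isLt; omega⟩

open Finset


/-- gap of a ℕ-indexed profile -/
noncomputable def wdG (y : ℕ → ℝ) (r : ℕ) : ℝ := y (r + 1) - y r

/-- the μ-weighted sum of gaps `s_r = Σ_{j≤r} μ^j g_{r-j}` via recursion -/
noncomputable def wdS (μ : ℝ) (y : ℕ → ℝ) : ℕ → ℝ
  | 0 => wdG y 0
  | r + 1 => wdG y (r + 1) + μ * wdS μ y r

lemma wdS_eq_sum (μ : ℝ) (y : ℕ → ℝ) (r : ℕ) :
    wdS μ y r = ∑ j ∈ Finset.range (r + 1), μ ^ j * wdG y (r - j) := by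
  induction r with
  | zero => simp [wdS]
  | succ r ih =>
    rw [Finset.sum_range_succ' (fun j => μ ^ j * wdG y (r + 1 - j))]
    simp only [Nat.succ_sub_succ, pow_succ, pow_zero, one_mul, Nat.sub_zero]
    rw [wdS, ih, Finset.mul_sum]
    have : ∀ j, μ ^ j * μ * wdG y (r - j) = μ * (μ ^ j * wdG y (r - j)) := fun j => by ring
    simp only [this]
    ring

lemma wdS_succ' (μ : ℝ) (y : ℕ → ℝ) (u : ℕ) :
    wdS μ y u = wdG y u + μ * (if 1 ≤ u then wdS μ y (u - 1) else 0) := by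
  cases u with
  | zero => simp [wdS]
  | succ v => simp [wdS]

lemma wdS_nonneg (μ : ℝ) (hμ : 0 ≤ μ) (y : ℕ → ℝ) (r : ℕ)
    (hg : ∀ l ≤ r, 0 ≤ wdG y l) : 0 ≤ wdS μ y r := by
  induction r with
  | zero => exact hg 0 le_rfl
  | succ r ih =>
    have := ih (fun l hl => hg l (by omega))
    have := hg (r + 1) le_rfl
    rw [wdS]
    positivity

lemma wdG_le_wdS (μ : ℝ) (hμ : 0 ≤ μ) (y : ℕ → ℝ) (r : ℕ)
    (hg : ∀ l ≤ r, 0 ≤ wdG y l) : wdG y r ≤ wdS μ y r := by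
  cases r with
  | zero => simp [wdS]
  | succ v =>
    rw [wdS]
    have h := wdS_nonneg μ hμ y v (fun l hl => hg l (by omega))
    nlinarith

lemma wdS_congr (μ : ℝ) (y y' : ℕ → ℝ) (r : ℕ) (h : ∀ l ≤ r + 1, y l = y' l) :
    wdS μ y r = wdS μ y' r := by
  induction r with
  | zero => simp [wdS, wdG, h 0 (by omega), h 1 (by omega)]
  | succ r ih =>
    rw [wdS, wdS, wdG, wdG, h (r + 2) (by omega), h (r + 1) (by omega),
      ih (fun l hl => h l (by omega))]

/-- closed form of one full pass of the phone chain over block `[0,m)` -/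
noncomputable def wdPass (μ : ℝ) (m : ℕ) (y : ℕ → ℝ) (l : ℕ) : ℝ :=
  y l + μ * ((if l + 1 < m then wdS μ y l else 0) -
             (if l < m ∧ 1 ≤ l then wdS μ y (l - 1) else 0))

lemma wdPass_of_ge (μ : ℝ) (m : ℕ) (y : ℕ → ℝ) (l : ℕ) (h : m ≤ l) :
    wdPass μ m y l = y l := by
  unfold wdPass
  rw [if_neg (by omega), if_neg (by omega)]
  ring

/-- mid-pass closed form: state after interactions (0,1),…,(u-1,u) -/
noncomputable def wdMid (μ : ℝ) (m : ℕ) (y : ℕ → ℝ) (u l : ℕ) : ℝ :=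
  if l < u then wdPass μ m y l
  else if l = u then y u - μ * (if 1 ≤ u then wdS μ y (u - 1) else 0)
  else y l

lemma wdMid_zero (μ : ℝ) (m : ℕ) (y : ℕ → ℝ) (l : ℕ) : wdMid μ m y 0 l = y l := by
  unfold wdMid
  split_ifs with h1 h2 <;> first | omega | (subst h2; simp) | rfl
lemma wdG_wdPass (μ : ℝ) (m : ℕ) (y : ℕ → ℝ) (hm : 2 ≤ m) (r : ℕ) (hr : r < m - 1) :
    wdG (wdPass μ m y) r =
      (1 - 2 * μ) * wdS μ y r + μ * (if r + 1 < m - 1 then wdS μ y (r + 1) else 0) := by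
  have h1 : r + 1 < m := by omega
  have h1' : (1:ℕ) ≤ r + 1 := by omega
  by_cases hc : r + 1 < m - 1
  · have hc2 : r + 1 + 1 < m := by omega
    cases r with
    | zero => simp [wdG, wdPass, wdS, h1, hc, hc2]; ring
    | succ v =>
      have hv : v + 1 < m := by omega
      have hv1 : (1:ℕ) ≤ v + 1 := by omega
      simp [wdG, wdPass, wdS, h1, hc, hc2, hv, hv1]; ring
  · have hc2 : ¬ (r + 1 + 1 < m) := by omega
    cases r with
    | zero => simp [wdG, wdPass, wdS, h1, hc, hc2]; ring
    | succ v =>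
      have hv : v + 1 < m := by omega
      have hv1 : (1:ℕ) ≤ v + 1 := by omega
      simp [wdG, wdPass, wdS, h1, hc, hc2, hv, hv1]; ring

lemma wdG_wdPass_nonneg (μ : ℝ) (m : ℕ) (y : ℕ → ℝ) (hm : 2 ≤ m)
    (hμ0 : 0 < μ) (hμ : μ ≤ 1 / 2)
    (hg : ∀ l, l < m - 1 → 0 ≤ wdG y l) (r : ℕ) (hr : r < m - 1) :
    0 ≤ wdG (wdPass μ m y) r := by
  rw [wdG_wdPass μ m y hm r hr]
  have h1 : 0 ≤ wdS μ y r := wdS_nonneg μ hμ0.le y r (fun l hl => hg l (by omega))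
  have h2 : 0 ≤ (if r + 1 < m - 1 then wdS μ y (r + 1) else 0) := by
    split_ifs with h
    · exact wdS_nonneg μ hμ0.le y (r + 1) (fun l hl => hg l (by omega))
    · exact le_rfl
  nlinarith [h1, h2, mul_nonneg (show (0:ℝ) ≤ 1 - 2*μ by linarith) h1]

lemma wdG_wdPass_le (μ : ℝ) (m : ℕ) (y : ℕ → ℝ) (C : ℝ) (hm : 2 ≤ m)
    (hμ0 : 0 < μ) (hμ : μ ≤ 1 / 2) (hC : 0 ≤ C)
    (hs : ∀ l, l < m - 1 → wdS μ y l ≤ C) (r : ℕ) (hr : r < m - 1) :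
    wdG (wdPass μ m y) r ≤ (1 - μ) * C := by
  rw [wdG_wdPass μ m y hm r hr]
  have h1 : wdS μ y r ≤ C := hs r hr
  have h2 : (if r + 1 < m - 1 then wdS μ y (r + 1) else 0) ≤ C := by
    split_ifs with h
    · exact hs (r + 1) h
    · exact hC
  nlinarith

lemma wdS_wdPass_le (μ : ℝ) (m : ℕ) (y : ℕ → ℝ) (C : ℝ) (hm : 2 ≤ m)
    (hμ0 : 0 < μ) (hμ : μ ≤ 1 / 2) (hC : 0 ≤ C)
    (hg : ∀ l, l < m - 1 → 0 ≤ wdG y l)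
    (hs : ∀ l, l < m - 1 → wdS μ y l ≤ C) (r : ℕ) (hr : r < m - 1) :
    wdS μ (wdPass μ m y) r ≤ (1 - μ ^ (m - 1)) * C := by
  have key : ∀ r, r < m - 1 → wdS μ (wdPass μ m y) r ≤ (1 - μ ^ (r + 1)) * C := by
    intro r hr
    induction r with
    | zero =>
      have := wdG_wdPass_le μ m y C hm hμ0 hμ hC hs 0 hr
      rw [show wdS μ (wdPass μ m y) 0 = wdG (wdPass μ m y) 0 from rfl]
      calc wdG (wdPass μ m y) 0 ≤ (1 - μ) * C := this
        _ = (1 - μ ^ (0 + 1)) * C := by ring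
    | succ v ih =>
      have h1 := wdG_wdPass_le μ m y C hm hμ0 hμ hC hs (v + 1) hr
      have h2 := ih (by omega)
      rw [wdS]
      have hμp : 0 < μ ^ (v + 1) := pow_pos hμ0 _
      calc wdG (wdPass μ m y) (v + 1) + μ * wdS μ (wdPass μ m y) v
          ≤ (1 - μ) * C + μ * ((1 - μ ^ (v + 1)) * C) := by nlinarith
        _ = (1 - μ ^ (v + 1 + 1)) * C := by ring
  calc wdS μ (wdPass μ m y) r ≤ (1 - μ ^ (r + 1)) * C := key r hr
    _ ≤ (1 - μ ^ (m - 1)) * C := by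
        have : μ ^ (m - 1) ≤ μ ^ (r + 1) :=
          pow_le_pow_of_le_one hμ0.le (by linarith) (by omega)
        nlinarith

lemma wdPass_sum (μ : ℝ) (m : ℕ) (y : ℕ → ℝ) (hm : 1 ≤ m) :
    ∑ l ∈ Finset.range m, wdPass μ m y l = ∑ l ∈ Finset.range m, y l := by
  obtain ⟨M, rfl⟩ : ∃ M, m = M + 1 := ⟨m - 1, by omega⟩
  have key : ∑ l ∈ Finset.range (M + 1), (if l + 1 < M + 1 then wdS μ y l else 0)
      = ∑ l ∈ Finset.range (M + 1), (if l < M + 1 ∧ 1 ≤ l then wdS μ y (l - 1) else 0) := by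
    rw [Finset.sum_range_succ, if_neg (by omega),
      Finset.sum_range_succ' (fun l => if l < M + 1 ∧ 1 ≤ l then wdS μ y (l - 1) else 0)]
    rw [if_neg (by omega)]
    rw [add_zero, add_zero]
    refine Finset.sum_congr rfl (fun l hl => ?_)
    have hlM := Finset.mem_range.1 hl
    rw [if_pos (by omega), if_pos (by omega)]
    simp
  unfold wdPass
  rw [Finset.sum_add_distrib, ← Finset.mul_sum, Finset.sum_sub_distrib]
  rw [key, sub_self, mul_zero, add_zero]

/-- the pair (l, l+1) as a pair of agents (junk value if out of range) -/
def wdPr (n : ℕ) (hn : 2 ≤ n) (l : ℕ) : Fin n × Fin n :=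
  if h : l + 1 < n then (⟨l, by omega⟩, ⟨l + 1, h⟩) else (⟨0, by omega⟩, ⟨1, by omega⟩)

lemma wdPr_ne (n : ℕ) (hn : 2 ≤ n) (l : ℕ) : (wdPr n hn l).1 ≠ (wdPr n hn l).2 := by
  unfold wdPr
  split_ifs with h <;> simp [Fin.ext_iff]

/-- restriction of a profile to the block starting at `a`, as a ℕ-indexed profile -/
noncomputable def wdRestr {n : ℕ} (a : ℕ) (x : Fin n → ℝ) : ℕ → ℝ :=
  fun l => if h : a + l < n then x ⟨a + l, h⟩ else 0

lemma wdRestr_apply {n : ℕ} (a : ℕ) (x : Fin n → ℝ) (i : Fin n) (h : a ≤ (i : ℕ)) :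
    wdRestr a x ((i : ℕ) - a) = x i := by
  unfold wdRestr
  rw [dif_pos (by omega)]
  congr 1
  exact Fin.ext (by simp; omega)

lemma onepass {n : ℕ} (hn : 2 ≤ n) (ε μ : ℝ) (hμ0 : 0 < μ) (hμ : μ ≤ 1 / 2)
    (regime : ℕ → Fin n × Fin n) (x0 : Fin n → ℝ) (a m t0 : ℕ)
    (hm : 2 ≤ m) (hmn : a + m ≤ n)
    (hreg : ∀ u, u < m - 1 → regime (t0 + u) = wdPr n hn (a + u))
    (hg : ∀ r, r < m - 1 → 0 ≤ wdG (wdRestr a (wdTraj ε μ regime x0 t0)) r)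
    (hs : ∀ r, r < m - 1 → wdS μ (wdRestr a (wdTraj ε μ regime x0 t0)) r < ε) :
    ∀ u, u ≤ m - 1 → ∀ i : Fin n,
      wdTraj ε μ regime x0 (t0 + u) i =
        if a ≤ (i : ℕ) ∧ (i : ℕ) < a + m then
          wdMid μ m (wdRestr a (wdTraj ε μ regime x0 t0)) u ((i : ℕ) - a)
        else wdTraj ε μ regime x0 t0 i := by
  set y : ℕ → ℝ := wdRestr a (wdTraj ε μ regime x0 t0) with hy
  intro u
  induction u with
  | zero =>
    intro _ i
    simp only [Nat.add_zero, wdMid_zero]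
    split_ifs with h
    · exact (wdRestr_apply a _ i h.1).symm
    · rfl
  | succ u ih =>
    intro hu i
    have hum : u < m - 1 := by omega
    have IH := ih (by omega)
    have hstep : wdTraj ε μ regime x0 (t0 + (u + 1)) =
        wdStep ε μ (regime (t0 + u)).1 (regime (t0 + u)).2 (wdTraj ε μ regime x0 (t0 + u)) :=
      rfl
    have hj0n : a + u + 1 < n := by omega
    set i0 : Fin n := ⟨a + u, by omega⟩ with hi0d
    set j0 : Fin n := ⟨a + u + 1, hj0n⟩ with hj0d
    have hi0v : (i0 : ℕ) = a + u := rfl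
    have hj0v : (j0 : ℕ) = a + u + 1 := rfl
    have hpair : regime (t0 + u) = (i0, j0) := by
      rw [hreg u hum]
      unfold wdPr
      rw [dif_pos hj0n]
    set Xu := wdTraj ε μ regime x0 (t0 + u) with hXu
    have hXi0 : Xu i0 = y u - μ * (if 1 ≤ u then wdS μ y (u - 1) else 0) := by
      rw [IH i0, if_pos (show a ≤ (i0 : ℕ) ∧ (i0 : ℕ) < a + m by omega),
        show ((i0 : ℕ) - a) = u by omega]
      unfold wdMid
      rw [if_neg (by omega)]
      try rw [if_pos rfl]
    have hXj0 : Xu j0 = y (u + 1) := by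
      rw [IH j0, if_pos (show a ≤ (j0 : ℕ) ∧ (j0 : ℕ) < a + m by omega),
        show ((j0 : ℕ) - a) = u + 1 by omega]
      unfold wdMid
      rw [if_neg (by omega)]
      try rw [if_neg (by omega)]
    have hSrec : wdS μ y u = wdG y u + μ * (if 1 ≤ u then wdS μ y (u - 1) else 0) :=
      wdS_succ' μ y u
    have hdiff : Xu j0 - Xu i0 = wdS μ y u := by
      rw [hXi0, hXj0, hSrec]
      unfold wdG
      ring
    have hSnn : 0 ≤ wdS μ y u := wdS_nonneg μ hμ0.le y u (fun l hl => hg l (by omega))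
    have habs : |Xu i0 - Xu j0| < ε := by
      rw [abs_sub_comm, abs_of_nonneg (by rw [hdiff]; exact hSnn), hdiff]
      exact hs u hum
    rw [hstep, hpair]
    unfold wdStep
    rw [if_pos habs]
    by_cases hij0 : i = j0
    · subst hij0
      rw [Function.update_self,
        if_pos (show a ≤ (j0 : ℕ) ∧ (j0 : ℕ) < a + m by omega),
        show ((j0 : ℕ) - a) = u + 1 by omega]
      unfold wdMid
      rw [if_neg (by omega), if_pos rfl,
        if_pos (Nat.le_add_left 1 u), Nat.add_sub_cancel, hXi0, hXj0, hSrec]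
      unfold wdG
      ring
    · rw [Function.update_of_ne hij0]
      by_cases hii0 : i = i0
      · subst hii0
        rw [Function.update_self,
          if_pos (show a ≤ (i0 : ℕ) ∧ (i0 : ℕ) < a + m by omega),
          show ((i0 : ℕ) - a) = u by omega]
        unfold wdMid
        rw [if_pos (by omega)]
        unfold wdPass
        rw [if_pos (by omega)]
        have hifeq : (if u < m ∧ 1 ≤ u then wdS μ y (u - 1) else 0)
            = (if 1 ≤ u then wdS μ y (u - 1) else 0) := by
          by_cases h1u : 1 ≤ u
          · rw [if_pos ⟨by omega, h1u⟩, if_pos h1u]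
          · rw [if_neg (by omega), if_neg h1u]
        rw [hifeq, hXi0, hXj0, hSrec]
        unfold wdG
        ring
      · have hne1 : (i : ℕ) ≠ a + u := by
          intro h
          exact hii0 (Fin.ext (by rw [h]; try exact hi0v.symm))
        have hne2 : (i : ℕ) ≠ a + u + 1 := by
          intro h
          exact hij0 (Fin.ext (by rw [h]; try exact hj0v.symm))
        rw [Function.update_of_ne hii0, IH i]
        by_cases hblk : a ≤ (i : ℕ) ∧ (i : ℕ) < a + m
        · rw [if_pos hblk, if_pos hblk]
          set l := (i : ℕ) - a with hld
          have hlu : l ≠ u := by omega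
          have hlu1 : l ≠ u + 1 := by omega
          unfold wdMid
          by_cases h1 : l < u
          · rw [if_pos h1, if_pos (by omega)]
          · rw [if_neg h1, if_neg (by omega), if_neg (by omega), if_neg (by omega)]
        · rw [if_neg hblk, if_neg hblk]

lemma multipass {n : ℕ} (hn : 2 ≤ n) (ε μ : ℝ) (hε : 0 < ε) (hμ0 : 0 < μ) (hμ : μ ≤ 1 / 2)
    (regime : ℕ → Fin n × Fin n) (x0 : Fin n → ℝ) (a m t0 : ℕ) (C : ℝ) (p : ℕ)
    (hm : 1 ≤ m) (hmn : a + m ≤ n)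
    (hreg : ∀ t, t0 ≤ t → t < t0 + p * (m - 1) →
      regime t = wdPr n hn (a + (t - t0) % (m - 1)))
    (hg : ∀ r, r < m - 1 → 0 ≤ wdG (wdRestr a (wdTraj ε μ regime x0 t0)) r)
    (hs : ∀ r, r < m - 1 → wdS μ (wdRestr a (wdTraj ε μ regime x0 t0)) r ≤ C)
    (hC0 : 0 ≤ C) (hCε : C < ε) :
    (∀ i : Fin n, ((i : ℕ) < a ∨ a + m ≤ (i : ℕ)) →
        wdTraj ε μ regime x0 (t0 + p * (m - 1)) i = wdTraj ε μ regime x0 t0 i)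
    ∧ (∀ r, r < m - 1 → 0 ≤ wdG (wdRestr a (wdTraj ε μ regime x0 (t0 + p * (m - 1)))) r)
    ∧ (∀ r, r < m - 1 → wdS μ (wdRestr a (wdTraj ε μ regime x0 (t0 + p * (m - 1)))) r
        ≤ (1 - μ ^ (m - 1)) ^ p * C)
    ∧ (∑ l ∈ Finset.range m, wdRestr a (wdTraj ε μ regime x0 (t0 + p * (m - 1))) l
        = ∑ l ∈ Finset.range m, wdRestr a (wdTraj ε μ regime x0 t0) l) := by
  by_cases hm1 : m = 1
  · subst hm1
    simp only [Nat.sub_self, Nat.mul_zero, Nat.add_zero]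
    exact ⟨fun i _ => trivial, fun r hr => by omega, fun r hr => by omega, trivial⟩
  have hm2 : 2 ≤ m := by omega
  have hμ1 : μ < 1 := by linarith
  have hq0 : 0 ≤ 1 - μ ^ (m - 1) := by
    have : μ ^ (m - 1) ≤ 1 := pow_le_one₀ hμ0.le hμ1.le
    linarith
  have hq1 : 1 - μ ^ (m - 1) ≤ 1 := by
    have : 0 < μ ^ (m - 1) := pow_pos hμ0 _
    linarith
  suffices H : ∀ p', p' ≤ p →
      (∀ i : Fin n, ((i : ℕ) < a ∨ a + m ≤ (i : ℕ)) →
        wdTraj ε μ regime x0 (t0 + p' * (m - 1)) i = wdTraj ε μ regime x0 t0 i)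
      ∧ (∀ r, r < m - 1 → 0 ≤ wdG (wdRestr a (wdTraj ε μ regime x0 (t0 + p' * (m - 1)))) r)
      ∧ (∀ r, r < m - 1 → wdS μ (wdRestr a (wdTraj ε μ regime x0 (t0 + p' * (m - 1)))) r
          ≤ (1 - μ ^ (m - 1)) ^ p' * C)
      ∧ (∑ l ∈ Finset.range m, wdRestr a (wdTraj ε μ regime x0 (t0 + p' * (m - 1))) l
          = ∑ l ∈ Finset.range m, wdRestr a (wdTraj ε μ regime x0 t0) l) by
    exact H p le_rfl
  intro p'
  induction p' with
  | zero =>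
    intro _
    simp only [Nat.zero_mul, Nat.add_zero, pow_zero, one_mul]
    exact ⟨fun i _ => trivial, hg, hs, trivial⟩
  | succ p' ih =>
    intro hp'
    obtain ⟨ih1, ih2, ih3, ih4⟩ := ih (by omega)
    set t1 := t0 + p' * (m - 1) with ht1
    set y1 : ℕ → ℝ := wdRestr a (wdTraj ε μ regime x0 t1) with hy1
    have hqpC : (1 - μ ^ (m - 1)) ^ p' * C ≤ C := by
      have h1 : (1 - μ ^ (m - 1)) ^ p' ≤ 1 := pow_le_one₀ hq0 hq1
      nlinarith [pow_nonneg hq0 p']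
    have hsε : ∀ r, r < m - 1 → wdS μ y1 r < ε :=
      fun r hr => lt_of_le_of_lt (le_trans (ih3 r hr) hqpC) hCε
    have hreg' : ∀ u, u < m - 1 → regime (t1 + u) = wdPr n hn (a + u) := by
      intro u hu
      have h1 : t0 ≤ t1 + u := by omega
      have h2 : t1 + u < t0 + p * (m - 1) := by
        have hle : (p' + 1) * (m - 1) ≤ p * (m - 1) := Nat.mul_le_mul_right _ hp'
        have hexp : (p' + 1) * (m - 1) = p' * (m - 1) + (m - 1) := by ring
        omega
      rw [hreg (t1 + u) h1 h2]
      congr 1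
      have : t1 + u - t0 = p' * (m - 1) + u := by omega
      rw [this, Nat.add_comm (p' * (m - 1)) u, Nat.add_mul_mod_self_right, Nat.mod_eq_of_lt hu]
    have hop := onepass hn ε μ hμ0 hμ regime x0 a m t1 hm2 hmn hreg' ih2 hsε
    have hfin := hop (m - 1) le_rfl
    have hmid : ∀ l, l < m → wdMid μ m y1 (m - 1) l = wdPass μ m y1 l := by
      intro l hl
      unfold wdMid wdPass
      by_cases h1 : l < m - 1
      · rw [if_pos h1]
      · have hl1 : l = m - 1 := by omega
        subst hl1
        rw [if_pos (show (1:ℕ) ≤ m - 1 by omega),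
            if_neg (show ¬(m - 1 + 1 < m) by omega),
            if_pos (show m - 1 < m ∧ 1 ≤ m - 1 by omega), if_neg h1]
        rw [if_pos rfl]
        ring
    have htt : t0 + (p' + 1) * (m - 1) = t1 + (m - 1) := by
      rw [ht1]
      ring
    have hout : ∀ i : Fin n, ((i : ℕ) < a ∨ a + m ≤ (i : ℕ)) →
        wdTraj ε μ regime x0 (t0 + (p' + 1) * (m - 1)) i = wdTraj ε μ regime x0 t1 i := by
      intro i hi
      rw [htt, hfin i, if_neg (by omega)]
    have hblock : ∀ l, l < m →
        wdRestr a (wdTraj ε μ regime x0 (t0 + (p' + 1) * (m - 1))) l = wdPass μ m y1 l := by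
      intro l hl
      have hln : a + l < n := by omega
      unfold wdRestr
      rw [dif_pos hln, htt, hfin ⟨a + l, hln⟩]
      have hv : ((⟨a + l, hln⟩ : Fin n) : ℕ) = a + l := rfl
      rw [if_pos (show a ≤ a + l ∧ a + l < a + m by omega),
        show (a + l - a) = l by omega, hmid l hl]
    refine ⟨fun i hi => (hout i hi).trans (ih1 i hi), ?_, ?_, ?_⟩
    · intro r hr
      have : wdG (wdRestr a (wdTraj ε μ regime x0 (t0 + (p' + 1) * (m - 1)))) r
          = wdG (wdPass μ m y1) r := by
        unfold wdG
        rw [hblock r (by omega), hblock (r + 1) (by omega)]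
      rw [this]
      exact wdG_wdPass_nonneg μ m y1 hm2 hμ0 hμ ih2 r hr
    · intro r hr
      have heq : wdS μ (wdRestr a (wdTraj ε μ regime x0 (t0 + (p' + 1) * (m - 1)))) r
          = wdS μ (wdPass μ m y1) r :=
        wdS_congr μ _ _ r (fun l hl => hblock l (by omega))
      rw [heq, pow_succ]
      have := wdS_wdPass_le μ m y1 ((1 - μ ^ (m - 1)) ^ p' * C) hm2 hμ0 hμ
        (by positivity) ih2 ih3 r hr
      calc wdS μ (wdPass μ m y1) r ≤ (1 - μ ^ (m - 1)) * ((1 - μ ^ (m - 1)) ^ p' * C) := this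
        _ = (1 - μ ^ (m - 1)) ^ p' * (1 - μ ^ (m - 1)) * C := by ring
    · calc ∑ l ∈ Finset.range m, wdRestr a (wdTraj ε μ regime x0 (t0 + (p' + 1) * (m - 1))) l
          = ∑ l ∈ Finset.range m, wdPass μ m y1 l :=
            Finset.sum_congr rfl (fun l hl => hblock l (Finset.mem_range.1 hl))
        _ = ∑ l ∈ Finset.range m, y1 l := wdPass_sum μ m y1 hm
        _ = ∑ l ∈ Finset.range m, wdRestr a (wdTraj ε μ regime x0 t0) l := ih4

lemma block_bounds (m : ℕ) (hm : 1 ≤ m) (y : ℕ → ℝ) (B : ℝ) (hB : 0 ≤ B)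
    (hg : ∀ r, r < m - 1 → 0 ≤ wdG y r) (hgB : ∀ r, r < m - 1 → wdG y r ≤ B) :
    ∀ l, l < m →
      y l ≤ (∑ j ∈ Finset.range m, y j) / m + (m - 1 : ℕ) * B ∧
      (∑ j ∈ Finset.range m, y j) / m - (m - 1 : ℕ) * B ≤ y l := by
  have mono : ∀ l l', l ≤ l' → l' < m → y l ≤ y l' := by
    intro l l' hll' hl'
    induction l' with
    | zero =>
      have h0 : l = 0 := by omega
      rw [h0]
    | succ v ihv =>
      rcases Nat.lt_or_ge l (v + 1) with h | h
      · have h1 := ihv (by omega) (by omega)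
        have h2 : 0 ≤ wdG y v := hg v (by omega)
        unfold wdG at h2
        linarith
      · have : l = v + 1 := by omega
        rw [this]
  have spread : y (m - 1) - y 0 ≤ (m - 1 : ℕ) * B := by
    have h1 : y (m - 1) - y 0 = ∑ r ∈ Finset.range (m - 1), wdG y r := by
      rw [show (fun r => wdG y r) = (fun r => y (r + 1) - y r) from rfl]
      rw [Finset.sum_range_sub (fun r => y r) (m - 1)]
    rw [h1]
    calc ∑ r ∈ Finset.range (m - 1), wdG y r ≤ ∑ _r ∈ Finset.range (m - 1), B :=
          Finset.sum_le_sum (fun r hr => hgB r (Finset.mem_range.1 hr))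
      _ = (m - 1 : ℕ) * B := by rw [Finset.sum_const, Finset.card_range, nsmul_eq_mul]
  have hmpos : (0 : ℝ) < m := by exact_mod_cast hm
  have low : (m : ℝ) * y 0 ≤ ∑ j ∈ Finset.range m, y j := by
    calc (m : ℝ) * y 0 = ∑ _j ∈ Finset.range m, y 0 := by
          rw [Finset.sum_const, Finset.card_range, nsmul_eq_mul]
      _ ≤ ∑ j ∈ Finset.range m, y j :=
          Finset.sum_le_sum (fun j hj => mono 0 j (by omega) (Finset.mem_range.1 hj))
  have high : ∑ j ∈ Finset.range m, y j ≤ (m : ℝ) * y (m - 1) := by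
    calc ∑ j ∈ Finset.range m, y j ≤ ∑ _j ∈ Finset.range m, y (m - 1) :=
          Finset.sum_le_sum (fun j hj => mono j (m - 1) (by
            have := Finset.mem_range.1 hj; omega) (by omega))
      _ = (m : ℝ) * y (m - 1) := by rw [Finset.sum_const, Finset.card_range, nsmul_eq_mul]
  intro l hl
  have h0m : y 0 ≤ (∑ j ∈ Finset.range m, y j) / m := by
    rw [le_div_iff₀ hmpos]
    linarith
  have hm0 : (∑ j ∈ Finset.range m, y j) / m ≤ y (m - 1) := by
    rw [div_le_iff₀ hmpos]
    linarith
  constructor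
  · have := mono l (m - 1) (by omega) (by omega)
    linarith
  · have := mono 0 l (by omega) hl
    linarith

lemma sum_restr {n : ℕ} (x : Fin n → ℝ) (a m : ℕ) (h : a + m ≤ n) :
    ∑ l ∈ Finset.range m, wdRestr a x l
      = ∑ i ∈ Finset.univ.filter (fun i : Fin n => a ≤ (i : ℕ) ∧ (i : ℕ) < a + m), x i := by
  set F : ℕ → ℝ := fun l => if a ≤ l ∧ l < a + m then wdRestr 0 x l else 0 with hF
  have step1 : ∑ i ∈ Finset.univ.filter (fun i : Fin n => a ≤ (i : ℕ) ∧ (i : ℕ) < a + m), x i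
      = ∑ i : Fin n, F (i : ℕ) := by
    rw [Finset.sum_filter]
    refine Finset.sum_congr rfl (fun i _ => ?_)
    simp only [hF]
    by_cases hc : a ≤ (i : ℕ) ∧ (i : ℕ) < a + m
    · rw [if_pos hc, if_pos hc]
      unfold wdRestr
      rw [dif_pos (by omega)]
      congr 1
      exact Fin.ext (by simp)
    · rw [if_neg hc, if_neg hc]
  have step2 : ∑ i : Fin n, F (i : ℕ) = ∑ l ∈ Finset.range n, F l :=
    Fin.sum_univ_eq_sum_range F n
  have step3 : ∑ l ∈ Finset.range n, F l = ∑ l ∈ Finset.range (a + m), F l := by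
    refine (Finset.sum_subset (Finset.range_subset_range.2 h) (fun l hl hl' => ?_)).symm
    simp only [hF]
    exact if_neg (fun hc => hl' (Finset.mem_range.2 hc.2))
  have step4 : ∑ l ∈ Finset.range (a + m), F l = ∑ l ∈ Finset.range m, F (a + l) := by
    rw [Finset.range_eq_Ico, ← Finset.sum_Ico_consecutive F (Nat.zero_le a) (Nat.le_add_right a m)]
    have hz : ∑ l ∈ Finset.Ico 0 a, F l = 0 := by
      refine Finset.sum_eq_zero (fun l hl => ?_)
      have := Finset.mem_Ico.1 hl
      simp only [hF]
      exact if_neg (fun hc => by omega)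
    rw [hz, zero_add, Finset.sum_Ico_eq_sum_range]
    simp
  have step5 : ∀ l ∈ Finset.range m, F (a + l) = wdRestr a x l := by
    intro l hl
    have hlm := Finset.mem_range.1 hl
    simp only [hF]
    rw [if_pos (show a ≤ a + l ∧ a + l < a + m by omega)]
    unfold wdRestr
    rw [dif_pos (by omega), dif_pos (by omega)]
    congr 1
    exact Fin.ext (by simp)
  rw [step1, step2, step3, step4, Finset.sum_congr rfl step5]

lemma convex_le_max (μ c d : ℝ) (h0 : 0 ≤ μ) (h1 : μ ≤ 1) :
    (1 - μ) * c + μ * d ≤ max c d := by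
  have h2 : (1 - μ) * c ≤ (1 - μ) * max c d :=
    mul_le_mul_of_nonneg_left (le_max_left c d) (by linarith)
  have h3 : μ * d ≤ μ * max c d := mul_le_mul_of_nonneg_left (le_max_right c d) h0
  linarith

lemma min_le_convex (μ c d : ℝ) (h0 : 0 ≤ μ) (h1 : μ ≤ 1) :
    min c d ≤ (1 - μ) * c + μ * d := by
  have h2 : (1 - μ) * min c d ≤ (1 - μ) * c :=
    mul_le_mul_of_nonneg_left (min_le_left c d) (by linarith)
  have h3 : μ * min c d ≤ μ * d := mul_le_mul_of_nonneg_left (min_le_right c d) h0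
  linarith

lemma sep_step {n : ℕ} (ε μ : ℝ) (hε : 0 < ε) (hμ0 : 0 < μ) (hμ : μ ≤ 1 / 2) (k : ℕ)
    (x : Fin n → ℝ)
    (hsep : ∀ a b : Fin n, (a : ℕ) < k → k ≤ (b : ℕ) → ε ≤ x b - x a) (i j : Fin n) :
    ∀ a b : Fin n, (a : ℕ) < k → k ≤ (b : ℕ) →
      ε ≤ wdStep ε μ i j x b - wdStep ε μ i j x a := by
  intro a b ha hb
  unfold wdStep
  split_ifs with h
  · by_cases hik : (i : ℕ) < k <;> by_cases hjk : (j : ℕ) < k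
    · -- both lower
      have hbj : b ≠ j := fun e => by rw [e] at hb; omega
      have hbi : b ≠ i := fun e => by rw [e] at hb; omega
      rw [Function.update_of_ne hbj, Function.update_of_ne hbi]
      have hxi := hsep i b hik hb
      have hxj := hsep j b hjk hb
      by_cases haj : a = j
      · subst haj
        rw [Function.update_self]
        nlinarith
      · rw [Function.update_of_ne haj]
        by_cases hai : a = i
        · subst hai
          rw [Function.update_self]
          nlinarith
        · rw [Function.update_of_ne hai]
          exact hsep a b ha hb
    · -- i lower, j upper: contradiction
      exfalso
      have := hsep i j hik (by omega)
      have h2 : ε ≤ |x i - x j| := by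
        rw [abs_sub_comm]
        exact this.trans (le_abs_self _)
      linarith
    · exfalso
      have := hsep j i hjk (by omega)
      have h2 : ε ≤ |x i - x j| := this.trans (le_abs_self _)
      linarith
    · -- both upper
      have haj : a ≠ j := fun e => by rw [e] at ha; omega
      have hai : a ≠ i := fun e => by rw [e] at ha; omega
      rw [Function.update_of_ne haj, Function.update_of_ne hai]
      have hxi := hsep a i ha (by omega)
      have hxj := hsep a j ha (by omega)
      by_cases hbj : b = j
      · subst hbj
        rw [Function.update_self]
        nlinarith
      · rw [Function.update_of_ne hbj]
        by_cases hbi : b = i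
        · subst hbi
          rw [Function.update_self]
          nlinarith
        · rw [Function.update_of_ne hbi]
          exact hsep a b ha hb
  · exact hsep a b ha hb

lemma traj_agree {n : ℕ} (ε μ : ℝ) (r1 r2 : ℕ → Fin n × Fin n) (x0 : Fin n → ℝ) (T : ℕ)
    (h : ∀ t, t < T → r2 t = r1 t) : ∀ t, t ≤ T → wdTraj ε μ r2 x0 t = wdTraj ε μ r1 x0 t := by
  intro t
  induction t with
  | zero => intro _; rfl
  | succ t ih =>
    intro ht
    show wdStep ε μ (r2 t).1 (r2 t).2 (wdTraj ε μ r2 x0 t)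
        = wdStep ε μ (r1 t).1 (r1 t).2 (wdTraj ε μ r1 x0 t)
    rw [h t (by omega), ih (by omega)]

lemma exists_bound (ε : ℝ) (hε : 0 < ε) (N : ℕ) (f : ℕ → ℝ)
    (hf : ∀ r, r < N → f r < ε) (hf0 : ∀ r, r < N → 0 ≤ f r) :
    ∃ C, 0 ≤ C ∧ C < ε ∧ ∀ r, r < N → f r ≤ C := by
  rcases Nat.eq_zero_or_pos N with hN | hN
  · exact ⟨0, le_rfl, hε, fun r hr => by omega⟩
  · have hne : (Finset.range N).Nonempty := ⟨0, Finset.mem_range.2 hN⟩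
    refine ⟨(Finset.range N).sup' hne f, ?_, ?_, ?_⟩
    · exact le_trans (hf0 0 hN) (Finset.le_sup' f (Finset.mem_range.2 hN))
    · exact (Finset.sup'_lt_iff hne).2 (fun r hr => hf r (Finset.mem_range.1 hr))
    · exact fun r hr => Finset.le_sup' f (Finset.mem_range.2 hr)

lemma exists_pass (q C M δ : ℝ) (hq0 : 0 ≤ q) (hq1 : q < 1) (hC : 0 ≤ C) (hM : 0 ≤ M)
    (hδ : 0 < δ) : ∃ p : ℕ, M * (q ^ p * C) ≤ δ := by
  obtain ⟨p, hp⟩ := exists_pow_lt_of_lt_one (show 0 < δ / (M * C + 1) by positivity) hq1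
  refine ⟨p, ?_⟩
  have h1 : q ^ p * (M * C + 1) < δ := by
    have h2 : 0 < M * C + 1 := by positivity
    calc q ^ p * (M * C + 1) < δ / (M * C + 1) * (M * C + 1) := by
          exact mul_lt_mul_of_pos_right hp h2
      _ = δ := by field_simp
  nlinarith [pow_nonneg hq0 p]

/-- Proposition 2, achievability of preventing consensus: if
`ε < D_k` for a maximizing split `k` and `ε` satisfies the phone-chain consensus
condition within each of the two subgroups `{1,…,k}` and `{k+1,…,n}`, then some
communication regime separates the two groups by at least `ε` at some finite time
`T`, after which no continuation of the regime can ever reach consensus. -/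
theorem wd_prevent_consensus_achievable {n : ℕ} (hn : 2 ≤ n) (ε μ : ℝ)
    (hε : 0 < ε) (hμ0 : 0 < μ) (hμ : μ ≤ 1 / 2)
    (x0 : Fin n → ℝ) (hord : Monotone x0)
    (k : ℕ) (hk1 : 1 ≤ k) (hk2 : k ≤ n - 1)
    (D : ℕ → ℝ)
    (hD : ∀ k' : ℕ, D k' =
      (∑ i ∈ Finset.univ.filter (fun i : Fin n => k' ≤ (i : ℕ)), x0 i) / ((n : ℝ) - k')
        - (∑ i ∈ Finset.univ.filter (fun i : Fin n => (i : ℕ) < k'), x0 i) / (k' : ℝ))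
    (hmax : ∀ k' ∈ Finset.Icc 1 (n - 1), D k' ≤ D k)
    (hεD : ε < D k)
    (hlow : ∀ i : Fin (n - 1), (i : ℕ) + 1 < k →
      (∑ j ∈ Finset.range ((i : ℕ) + 1),
        μ ^ j * gap x0 ⟨(i : ℕ) - j, by have := i.isLt; omega⟩) < ε)
    (hup : ∀ i : Fin (n - 1), k ≤ (i : ℕ) →
      (∑ j ∈ Finset.range ((i : ℕ) - k + 1),
        μ ^ j * gap x0 ⟨(i : ℕ) - j, by have := i.isLt; omega⟩) < ε) :
    ∃ (regime : ℕ → Fin n × Fin n) (T : ℕ),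
      (∀ t, (regime t).1 ≠ (regime t).2) ∧
      (∀ a b : Fin n, (a : ℕ) < k → k ≤ (b : ℕ) →
        ε ≤ wdTraj ε μ regime x0 T b - wdTraj ε μ regime x0 T a) ∧
      (∀ regime₂ : ℕ → Fin n × Fin n, (∀ t, (regime₂ t).1 ≠ (regime₂ t).2) →
        (∀ t < T, regime₂ t = regime t) →
        ¬ ∃ c : ℝ, ∀ i : Fin n,
          Tendsto (fun t => wdTraj ε μ regime₂ x0 t i) atTop (nhds c)) := by
  have hkn : k < n := by omega
  have hμ1 : μ < 1 := by linarith
  have restr_eq : ∀ (aa l : ℕ) (h2 : aa + l < n), wdRestr aa x0 l = x0 ⟨aa + l, h2⟩ := by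
    intro aa l h2
    unfold wdRestr
    rw [dif_pos h2]
  -- gaps of the initial profile
  have hgap : ∀ (l : ℕ) (hl : l < n - 1), wdG (wdRestr 0 x0) l = gap x0 ⟨l, hl⟩ := by
    intro l hl
    unfold wdG gap
    rw [restr_eq 0 (l + 1) (by omega), restr_eq 0 l (by omega)]
    congr 1 <;> exact congrArg x0 (Fin.ext (by simp))
  have hgapU : ∀ (l : ℕ) (hl : k + l < n - 1), wdG (wdRestr k x0) l = gap x0 ⟨k + l, hl⟩ := by
    intro l hl
    unfold wdG gap
    rw [restr_eq k (l + 1) (by omega), restr_eq k l (by omega)]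
    congr 1 <;> exact congrArg x0 (Fin.ext (by simp; omega))
  have hgl : ∀ r, r < k - 1 → 0 ≤ wdG (wdRestr 0 x0) r := by
    intro r hr
    unfold wdG
    rw [restr_eq 0 (r + 1) (by omega), restr_eq 0 r (by omega)]
    have := hord (show (⟨0 + r, by omega⟩ : Fin n) ≤ ⟨0 + (r + 1), by omega⟩ from by
      rw [Fin.mk_le_mk]; omega)
    linarith
  have hgu : ∀ r, r < n - k - 1 → 0 ≤ wdG (wdRestr k x0) r := by
    intro r hr
    unfold wdG
    rw [restr_eq k (r + 1) (by omega), restr_eq k r (by omega)]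
    have := hord (show (⟨k + r, by omega⟩ : Fin n) ≤ ⟨k + (r + 1), by omega⟩ from by
      rw [Fin.mk_le_mk]; omega)
    linarith
  have hsl : ∀ r, r < k - 1 → wdS μ (wdRestr 0 x0) r < ε := by
    intro r hr
    rw [wdS_eq_sum]
    have hsum : ∑ j ∈ Finset.range (r + 1), μ ^ j * wdG (wdRestr 0 x0) (r - j)
        = ∑ j ∈ Finset.range (r + 1), μ ^ j * gap x0 ⟨r - j, show r - j < n - 1 by omega⟩ :=
      Finset.sum_congr rfl (fun j _ => by rw [hgap (r - j) (show r - j < n - 1 by omega)])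
    rw [hsum]
    exact hlow ⟨r, by omega⟩ (show r + 1 < k by omega)
  have hsu : ∀ r, r < n - k - 1 → wdS μ (wdRestr k x0) r < ε := by
    intro r hr
    rw [wdS_eq_sum]
    have hsum : ∑ j ∈ Finset.range (r + 1), μ ^ j * wdG (wdRestr k x0) (r - j)
        = ∑ j ∈ Finset.range (r + 1), μ ^ j * gap x0 ⟨k + r - j, show k + r - j < n - 1 by omega⟩ := by
      refine Finset.sum_congr rfl (fun j hj => ?_)
      have hjr := Finset.mem_range.1 hj
      rw [hgapU (r - j) (show k + (r - j) < n - 1 by omega)]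
      congr 1
      exact congrArg (gap x0) (Fin.ext (by simp; omega))
    rw [hsum]
    have hupr := hup ⟨k + r, show k + r < n - 1 by omega⟩ (show k ≤ k + r by omega)
    have he : k + r - k + 1 = r + 1 := by omega
    rw [← he]
    exact hupr
  obtain ⟨C1, hC10, hC1ε, hC1⟩ := exists_bound ε hε (k - 1) (wdS μ (wdRestr 0 x0)) hsl
    (fun r hr => wdS_nonneg μ hμ0.le _ r (fun l hl => hgl l (by omega)))
  obtain ⟨C2, hC20, hC2ε, hC2⟩ := exists_bound ε hε (n - k - 1) (wdS μ (wdRestr k x0)) hsu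
    (fun r hr => wdS_nonneg μ hμ0.le _ r (fun l hl => hgu l (by omega)))
  set δ : ℝ := (D k - ε) / 2 with hδdef
  have hδ : 0 < δ := by rw [hδdef]; linarith
  have hq10 : 0 ≤ 1 - μ ^ (k - 1) := by
    have := pow_le_one₀ hμ0.le hμ1.le (n := k - 1)
    linarith
  have hq11 : 1 - μ ^ (k - 1) < 1 := by
    have := pow_pos hμ0 (k - 1)
    linarith
  have hq20 : 0 ≤ 1 - μ ^ (n - k - 1) := by
    have := pow_le_one₀ hμ0.le hμ1.le (n := n - k - 1)
    linarith
  have hq21 : 1 - μ ^ (n - k - 1) < 1 := by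
    have := pow_pos hμ0 (n - k - 1)
    linarith
  obtain ⟨p1, hp1⟩ := exists_pass (1 - μ ^ (k - 1)) C1 ((k - 1 : ℕ) : ℝ) δ hq10 hq11 hC10
    (by positivity) hδ
  obtain ⟨p2, hp2⟩ := exists_pass (1 - μ ^ (n - k - 1)) C2 ((n - k - 1 : ℕ) : ℝ) δ hq20 hq21 hC20
    (by positivity) hδ
  set regime : ℕ → Fin n × Fin n := fun t =>
    if t < p1 * (k - 1) then wdPr n hn (t % (k - 1))
    else if t < p1 * (k - 1) + p2 * (n - k - 1) then
      wdPr n hn (k + (t - p1 * (k - 1)) % (n - k - 1))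
    else wdPr n hn 0 with hregdef
  -- lower phase
  have hreg1 : ∀ t, 0 ≤ t → t < 0 + p1 * (k - 1) →
      regime t = wdPr n hn (0 + (t - 0) % (k - 1)) := by
    intro t _ ht
    rw [hregdef]
    simp only
    rw [if_pos (by omega)]
    simp
  obtain ⟨ML1, ML2, ML3, ML4⟩ := multipass hn ε μ hε hμ0 hμ regime x0 0 k 0 C1 p1
    hk1 (by omega) hreg1 hgl (fun r hr => hC1 r hr) hC10 hC1ε
  simp only [Nat.zero_add] at ML1 ML2 ML3 ML4
  -- upper phase
  have hreg2 : ∀ t, p1 * (k - 1) ≤ t → t < p1 * (k - 1) + p2 * (n - k - 1) →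
      regime t = wdPr n hn (k + (t - p1 * (k - 1)) % (n - k - 1)) := by
    intro t h1 h2
    rw [hregdef]
    simp only
    rw [if_neg (by omega), if_pos (by omega)]
  have hupeq : wdRestr k (wdTraj ε μ regime x0 (p1 * (k - 1))) = wdRestr k x0 := by
    funext l
    unfold wdRestr
    by_cases h : k + l < n
    · rw [dif_pos h, dif_pos h, ML1 ⟨k + l, h⟩ (Or.inr (show k ≤ k + l by omega))]
      rfl
    · rw [dif_neg h, dif_neg h]
  obtain ⟨MU1, MU2, MU3, MU4⟩ := multipass hn ε μ hε hμ0 hμ regime x0 k (n - k)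
    (p1 * (k - 1)) C2 p2 (by omega) (by omega) hreg2
    (by rw [hupeq]; exact hgu) (by rw [hupeq]; exact fun r hr => hC2 r hr) hC20 hC2ε
  -- abbreviations
  set T : ℕ := p1 * (k - 1) + p2 * (n - k - 1) with hTdef
  -- block bounds, lower at time p1*(k-1)
  have hB1 : ∀ r, r < k - 1 → wdG (wdRestr 0 (wdTraj ε μ regime x0 (p1 * (k - 1)))) r
      ≤ (1 - μ ^ (k - 1)) ^ p1 * C1 :=
    fun r hr => (wdG_le_wdS μ hμ0.le _ r (fun l hl => ML2 l (by omega))).trans (ML3 r hr)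
  have hbb1 := block_bounds k hk1 (wdRestr 0 (wdTraj ε μ regime x0 (p1 * (k - 1))))
    ((1 - μ ^ (k - 1)) ^ p1 * C1) (by positivity) ML2 hB1
  have hB2 : ∀ r, r < n - k - 1 → wdG (wdRestr k (wdTraj ε μ regime x0 T)) r
      ≤ (1 - μ ^ (n - k - 1)) ^ p2 * C2 :=
    fun r hr => (wdG_le_wdS μ hμ0.le _ r (fun l hl => MU2 l (by omega))).trans (MU3 r hr)
  have hbb2 := block_bounds (n - k) (by omega) (wdRestr k (wdTraj ε μ regime x0 T))
    ((1 - μ ^ (n - k - 1)) ^ p2 * C2) (by positivity) MU2 hB2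
  -- sums
  have hSlow : ∑ l ∈ Finset.range k, wdRestr 0 (wdTraj ε μ regime x0 (p1 * (k - 1))) l
      = ∑ i ∈ Finset.univ.filter (fun i : Fin n => (i : ℕ) < k), x0 i := by
    rw [ML4, show wdRestr 0 (wdTraj ε μ regime x0 0) = wdRestr 0 x0 from rfl,
      sum_restr x0 0 k (by omega)]
    apply Finset.sum_congr _ (fun _ _ => rfl)
    ext i
    simp only [Finset.mem_filter, Finset.mem_univ, true_and]
    omega
  have hSup : ∑ l ∈ Finset.range (n - k), wdRestr k (wdTraj ε μ regime x0 T) l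
      = ∑ i ∈ Finset.univ.filter (fun i : Fin n => k ≤ (i : ℕ)), x0 i := by
    rw [MU4, hupeq, sum_restr x0 k (n - k) (by omega)]
    apply Finset.sum_congr _ (fun _ _ => rfl)
    ext i
    simp only [Finset.mem_filter, Finset.mem_univ, true_and]
    have := i.isLt
    omega
  have hcast : ((n - k : ℕ) : ℝ) = (n : ℝ) - (k : ℝ) := by
    push_cast [Nat.cast_sub hkn.le]
    ring
  have hDk := hD k
  have hδ2 : 2 * δ = D k - ε := by rw [hδdef]; ring
  -- the separation at time T
  have hsepT : ∀ a b : Fin n, (a : ℕ) < k → k ≤ (b : ℕ) →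
      ε ≤ wdTraj ε μ regime x0 T b - wdTraj ε μ regime x0 T a := by
    intro a b ha hb
    have hXa1 : wdTraj ε μ regime x0 T a = wdTraj ε μ regime x0 (p1 * (k - 1)) a :=
      MU1 a (Or.inl ha)
    have hra : wdRestr 0 (wdTraj ε μ regime x0 (p1 * (k - 1))) ((a : ℕ))
        = wdTraj ε μ regime x0 (p1 * (k - 1)) a := by
      have := wdRestr_apply 0 (wdTraj ε μ regime x0 (p1 * (k - 1))) a (by omega)
      rwa [Nat.sub_zero] at this
    have h1 := (hbb1 (a : ℕ) (by omega)).1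
    rw [hSlow] at h1
    have hrb : wdRestr k (wdTraj ε μ regime x0 T) ((b : ℕ) - k)
        = wdTraj ε μ regime x0 T b := wdRestr_apply k _ b hb
    have h2 := (hbb2 ((b : ℕ) - k) (by omega)).2
    rw [hSup] at h2
    have e1 : wdTraj ε μ regime x0 T a
        ≤ (∑ i ∈ Finset.univ.filter (fun i : Fin n => (i : ℕ) < k), x0 i) / (k : ℝ) + δ := by
      rw [hXa1, ← hra]
      have h3 : ((k - 1 : ℕ) : ℝ) * ((1 - μ ^ (k - 1)) ^ p1 * C1) ≤ δ := hp1
      linarith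
    have e2 : (∑ i ∈ Finset.univ.filter (fun i : Fin n => k ≤ (i : ℕ)), x0 i) / ((n : ℝ) - (k : ℝ)) - δ
        ≤ wdTraj ε μ regime x0 T b := by
      rw [← hrb, ← hcast]
      have h3 : ((n - k - 1 : ℕ) : ℝ) * ((1 - μ ^ (n - k - 1)) ^ p2 * C2) ≤ δ := hp2
      linarith
    rw [hDk] at hδ2
    linarith
  refine ⟨regime, T, ?_, hsepT, ?_⟩
  · intro t
    rw [hregdef]
    simp only
    split_ifs <;> exact wdPr_ne n hn _
  · rintro regime₂ hne₂ hagr ⟨c, hc⟩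
    have hag : wdTraj ε μ regime₂ x0 T = wdTraj ε μ regime x0 T :=
      traj_agree ε μ regime regime₂ x0 T hagr T le_rfl
    have hsep2 : ∀ s, ∀ a b : Fin n, (a : ℕ) < k → k ≤ (b : ℕ) →
        ε ≤ wdTraj ε μ regime₂ x0 (T + s) b - wdTraj ε μ regime₂ x0 (T + s) a := by
      intro s
      induction s with
      | zero =>
        intro a b ha hb
        rw [Nat.add_zero, hag]
        exact hsepT a b ha hb
      | succ s ih =>
        have hst : wdTraj ε μ regime₂ x0 (T + (s + 1))
            = wdStep ε μ (regime₂ (T + s)).1 (regime₂ (T + s)).2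
                (wdTraj ε μ regime₂ x0 (T + s)) := rfl
        rw [hst]
        exact sep_step ε μ hε hμ0 hμ k _ ih _ _
    have hlim := (hc ⟨k, by omega⟩).sub (hc ⟨0, by omega⟩)
    rw [sub_self] at hlim
    have hev : ∀ᶠ t in atTop, ε ≤ wdTraj ε μ regime₂ x0 t ⟨k, by omega⟩
        - wdTraj ε μ regime₂ x0 t ⟨0, by omega⟩ := by
      refine eventually_atTop.2 ⟨T, fun t ht => ?_⟩
      obtain ⟨s, rfl⟩ := Nat.exists_eq_add_of_le ht
      exact hsep2 s ⟨0, by omega⟩ ⟨k, by omega⟩ (show (0 : ℕ) < k by omega) (show k ≤ k from le_rfl)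
    have hc0 := ge_of_tendsto hlim hev
    linarith
end

section
/- For i.i.d. uniform opinions the threshold ε_high converges to one half: let U_1, …, U_n be i.i.d. uniform on [0,1] with order statistics U_{(1)} ≤ … ≤ U_{(n)}, and define E_n := max_{k∈{1,…,n−1}} ( (1/(n−k))·Σ_{i=k+1}^n U_{(i)} − (1/k)·Σ_{j=1}^k U_{(j)} ). Then E_n → 1/2 in probability as n → ∞. -/
open Filter MeasureTheory ProbabilityTheory
open Finset Topology

/-- The nondecreasing rearrangement (order statistics) of a finite tuple of reals. -/
noncomputable def sortedTuple {m : ℕ} (f : Fin m → ℝ) : Fin m → ℝ :=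
  f ∘ Tuple.sort f

/-- For a tuple of `n` reals, the maximum over split points `k ∈ {1,…,n-1}` of the
difference between the mean of the upper `n-k` order statistics and the mean of the
lower `k` order statistics (the threshold `ε_high`). -/
noncomputable def epsHigh {n : ℕ} (f : Fin n → ℝ) : ℝ :=
  ⨆ kk : Fin (n - 1),
    ((∑ i : Fin n, if (kk : ℕ) < (i : ℕ) then sortedTuple f i else 0) /
        ((n : ℝ) - ((kk : ℕ) + 1)) -
     (∑ i : Fin n, if (i : ℕ) ≤ (kk : ℕ) then sortedTuple f i else 0) /
        (((kk : ℕ) : ℝ) + 1))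

lemma sortedTuple_monotone {m : ℕ} (f : Fin m → ℝ) : Monotone (sortedTuple f) :=
  Tuple.monotone_sort f

lemma sortedTuple_mem {m : ℕ} (f : Fin m → ℝ) (i : Fin m) : ∃ j, sortedTuple f i = f j :=
  ⟨Tuple.sort f i, rfl⟩

lemma card_sorted_le {m : ℕ} (f : Fin m → ℝ) (t : ℝ) :
    (univ.filter (fun i => sortedTuple f i ≤ t)).card
      = (univ.filter (fun i => f i ≤ t)).card := by
  apply Finset.card_bij (fun i _ => Tuple.sort f i)
  · intro a ha
    simp only [mem_filter, mem_univ, true_and] at ha ⊢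
    exact ha
  · intro a _ b _ h
    exact (Tuple.sort f).injective h
  · intro b hb
    refine ⟨(Tuple.sort f).symm b, ?_, by simp⟩
    simp only [mem_filter, mem_univ, true_and, sortedTuple, Function.comp] at hb ⊢
    exact Finset.mem_filter.mpr ⟨mem_univ _, by simpa [sortedTuple] using hb⟩

lemma monotone_le_iff_card {m : ℕ} {g : Fin m → ℝ} (hg : Monotone g) (i : Fin m) (t : ℝ) :
    g i ≤ t ↔ (i : ℕ) < (univ.filter (fun j => g j ≤ t)).card := by
  constructor
  · intro h
    have hsub : Finset.Iic i ⊆ univ.filter (fun j => g j ≤ t) := by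
      intro j hj
      simp only [mem_Iic] at hj
      simp only [mem_filter, mem_univ, true_and]
      exact le_trans (hg hj) h
    have := Finset.card_le_card hsub
    rw [Fin.card_Iic] at this
    omega
  · intro h
    by_contra hc
    push_neg at hc
    have hsub : univ.filter (fun j => g j ≤ t) ⊆ Finset.Iio i := by
      intro j hj
      simp only [mem_filter, mem_univ, true_and] at hj
      simp only [mem_Iio]
      by_contra hj2
      push_neg at hj2
      exact absurd (le_trans (hg hj2) hj) (not_le_of_gt hc)
    have := Finset.card_le_card hsub
    rw [Fin.card_Iio] at this
    omega

lemma sandwich {n m : ℕ} (hm : 1 ≤ m) (f : Fin n → ℝ)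
    (hrange : ∀ i, f i ∈ Set.Icc (0:ℝ) 1)
    (hcnt : ∀ j ≤ m, |((univ.filter (fun i : Fin n => f i ≤ (j:ℝ)/(m:ℝ))).card : ℝ)/(n:ℝ)
      - (j:ℝ)/(m:ℝ)| ≤ 1/(m:ℝ)) :
    ∀ i : Fin n, |sortedTuple f i - ((i:ℕ):ℝ)/(n:ℝ)| ≤ 4/(m:ℝ) := by
  intro i
  have hnpos : (0:ℝ) < n := by exact_mod_cast i.pos
  have hmpos : (0:ℝ) < m := by exact_mod_cast hm
  set r : ℝ := ((i:ℕ):ℝ)/(n:ℝ) with hrdef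
  have hnr : (n:ℝ) * r = ((i:ℕ):ℝ) := by rw [hrdef]; field_simp
  have hr0 : 0 ≤ r := by positivity
  have hr1 : r < 1 := by
    rw [hrdef, div_lt_one hnpos]
    exact_mod_cast i.isLt
  have hiff : ∀ (t : ℝ), sortedTuple f i ≤ t ↔
      (i:ℕ) < (univ.filter (fun j => f j ≤ t)).card := by
    intro t
    rw [monotone_le_iff_card (sortedTuple_monotone f) i t, card_sorted_le]
  have hgmem : sortedTuple f i ∈ Set.Icc (0:ℝ) 1 := by
    obtain ⟨j, hj⟩ := sortedTuple_mem f i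
    rw [hj]; exact hrange j
  have hub : sortedTuple f i ≤ r + 4/(m:ℝ) := by
    by_cases hcase : r + 4/(m:ℝ) ≤ 1
    · have hrm : r*m + 4 ≤ m := by
        have h4 : 4/(m:ℝ) ≤ 1 - r := by linarith
        have := (div_le_iff₀ hmpos).mp h4
        nlinarith
      set j : ℕ := ⌈r*m + 2⌉₊ with hjdef
      have hjm : j ≤ m := Nat.ceil_le.mpr (by linarith)
      have hjge : r*m + 2 ≤ (j:ℝ) := Nat.le_ceil _
      have hjlt : (j:ℝ) < r*m + 3 := by
        have := Nat.ceil_lt_add_one (a := r*m + 2) (by positivity)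
        linarith
      have hc := (abs_le.mp (hcnt j hjm)).1
      set c : ℕ := (univ.filter (fun i : Fin n => f i ≤ (j:ℝ)/(m:ℝ))).card with hcdef
      have hjc : (r*m + 2)/(m:ℝ) ≤ (j:ℝ)/(m:ℝ) := by gcongr
      have heq : (r*m + 2)/(m:ℝ) = r + 2/(m:ℝ) := by field_simp
      have hclow : r + 1/(m:ℝ) ≤ (c:ℝ)/(n:ℝ) := by
        rw [heq] at hjc
        have h1m : (2:ℝ)/m - 1/m = 1/m := by ring
        linarith
      have hic : (i:ℕ) < c := by
        have h2 : (r + 1/(m:ℝ)) * n ≤ (c:ℝ) := (le_div_iff₀ hnpos).mp hclow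
        have h3 : ((i:ℕ):ℝ) < (c:ℝ) := by
          have hnm : 0 < (n:ℝ)/m := by positivity
          have hexp : (r + 1/(m:ℝ)) * n = (n:ℝ)*r + (n:ℝ)/m := by ring
          rw [hexp, hnr] at h2
          linarith
        exact_mod_cast h3
      have hle : sortedTuple f i ≤ (j:ℝ)/(m:ℝ) := (hiff _).mpr hic
      have : (j:ℝ)/(m:ℝ) < r + 3/(m:ℝ) := by
        rw [div_lt_iff₀ hmpos]
        have : (r + 3/(m:ℝ))*m = r*m + 3 := by field_simp
        linarith [this]
      have h4 : (3:ℝ)/m ≤ 4/m := by gcongr <;> norm_num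
      linarith
    · push_neg at hcase
      exact le_trans hgmem.2 hcase.le
  have hlb : r - 4/(m:ℝ) ≤ sortedTuple f i := by
    by_cases hcase : 4/(m:ℝ) ≤ r
    · have hrm4 : 4 ≤ r*m := by
        have := (div_le_iff₀ hmpos).mp hcase
        linarith
      have hnn : 0 ≤ r*m - 2 := by linarith
      set j : ℕ := ⌊r*m - 2⌋₊ with hjdef
      have hjle : (j:ℝ) ≤ r*m - 2 := Nat.floor_le hnn
      have hjgt : r*m - 3 < (j:ℝ) := by
        have := Nat.lt_floor_add_one (r*m - 2)
        linarith
      have hjm : j ≤ m := by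
        have h1 : r*m - 2 ≤ (m:ℝ) := by nlinarith
        have := Nat.floor_mono h1
        rwa [Nat.floor_natCast] at this
      have hc := (abs_le.mp (hcnt j hjm)).2
      set c : ℕ := (univ.filter (fun i : Fin n => f i ≤ (j:ℝ)/(m:ℝ))).card with hcdef
      have hchigh : (c:ℝ)/(n:ℝ) ≤ r - 1/(m:ℝ) := by
        have hjc : (j:ℝ)/(m:ℝ) ≤ (r*m - 2)/(m:ℝ) := by gcongr
        have heq : (r*m - 2)/(m:ℝ) = r - 2/(m:ℝ) := by field_simp
        have h1m : (2:ℝ)/m - 1/m = 1/m := by ring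
        linarith
      have hci : ¬ ((i:ℕ) < c) := by
        have h2 : (c:ℝ) ≤ (r - 1/(m:ℝ)) * n := (div_le_iff₀ hnpos).mp hchigh
        have hnm : 0 < (n:ℝ)/m := by positivity
        have h3 : (c:ℝ) < ((i:ℕ):ℝ) := by
          have hexp : (r - 1/(m:ℝ)) * n = (n:ℝ)*r - (n:ℝ)/m := by ring
          rw [hexp, hnr] at h2
          linarith
        have : c < (i:ℕ) := by exact_mod_cast h3
        omega
      have hgt : (j:ℝ)/(m:ℝ) < sortedTuple f i := by
        by_contra hcon
        push_neg at hcon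
        exact hci ((hiff _).mp hcon)
      have : r - 3/(m:ℝ) < (j:ℝ)/(m:ℝ) := by
        rw [lt_div_iff₀ hmpos]
        have : (r - 3/(m:ℝ))*m = r*m - 3 := by field_simp
        linarith [this]
      have h4 : (3:ℝ)/m ≤ 4/m := by gcongr <;> norm_num
      linarith
    · push_neg at hcase
      have : r - 4/(m:ℝ) < 0 := by linarith
      linarith [hgmem.1]
  rw [abs_le]
  constructor <;> linarith

lemma sum_range_cast (K : ℕ) : (∑ i ∈ range K, (i:ℝ)) = (K:ℝ) * ((K:ℝ) - 1) / 2 := by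
  induction K with
  | zero => simp
  | succ k ih => rw [Finset.sum_range_succ, ih]; push_cast; ring

lemma filter_range_le (k n : ℕ) (h : k + 1 ≤ n) :
    (range n).filter (fun i => i ≤ k) = range (k+1) := by
  ext i; simp only [mem_filter, mem_range]; omega

lemma card_filter_le (k n : ℕ) (h : k < n) :
    (univ.filter (fun i : Fin n => (i:ℕ) ≤ k)).card = k + 1 := by
  have : univ.filter (fun i : Fin n => (i:ℕ) ≤ k) = Finset.Iic (⟨k, h⟩ : Fin n) := by
    ext i; simp [Finset.mem_Iic, Fin.le_def]
  rw [this, Fin.card_Iic]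

lemma card_filter_gt (k n : ℕ) (h : k < n) :
    (univ.filter (fun i : Fin n => k < (i:ℕ))).card = n - (k + 1) := by
  have h2 := Finset.card_filter_add_card_filter_not
    (s := (univ : Finset (Fin n))) (p := fun i : Fin n => (i:ℕ) ≤ k)
  simp only [not_le] at h2
  rw [card_filter_le k n h, Finset.card_univ, Fintype.card_fin] at h2
  omega

lemma sum_ite_err {n : ℕ} (p : Fin n → Prop) [DecidablePred p] (g c : Fin n → ℝ) (δ : ℝ)
    (h : ∀ i, |g i - c i| ≤ δ) :
    |(∑ i, if p i then g i else 0) - (∑ i, if p i then c i else 0)|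
      ≤ ((univ.filter p).card : ℝ) * δ := by
  rw [← Finset.sum_sub_distrib]
  calc |∑ i, ((if p i then g i else 0) - (if p i then c i else 0))|
      ≤ ∑ i, |(if p i then g i else 0) - (if p i then c i else 0)| :=
        Finset.abs_sum_le_sum_abs _ _
    _ ≤ ∑ i, (if p i then δ else 0) := by
        apply Finset.sum_le_sum
        intro i _
        by_cases hp : p i
        · simpa [hp] using h i
        · simp [hp]
    _ = ((univ.filter p).card : ℝ) * δ := by
        rw [← Finset.sum_filter, Finset.sum_const, nsmul_eq_mul]

lemma term_bound {n : ℕ} (hn : 2 ≤ n) (f : Fin n → ℝ) {δ : ℝ}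
    (h : ∀ i : Fin n, |sortedTuple f i - ((i:ℕ):ℝ)/(n:ℝ)| ≤ δ) (kk : Fin (n-1)) :
    |((∑ i : Fin n, if (kk : ℕ) < (i : ℕ) then sortedTuple f i else 0) /
        ((n : ℝ) - ((kk : ℕ) + 1)) -
     (∑ i : Fin n, if (i : ℕ) ≤ (kk : ℕ) then sortedTuple f i else 0) /
        (((kk : ℕ) : ℝ) + 1)) - 1/2| ≤ 2*δ := by
  have hδ : 0 ≤ δ := le_trans (abs_nonneg _) (h ⟨0, by omega⟩)
  set k : ℕ := (kk : ℕ) with hkdef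
  have hk : k < n - 1 := kk.isLt
  have hkn : k + 1 < n := by omega
  set N : ℝ := ((n:ℕ) : ℝ) with hNdef
  set K : ℝ := ((k:ℕ) : ℝ) with hKdef
  have hN : (0:ℝ) < N := by rw [hNdef]; exact_mod_cast Nat.pos_of_ne_zero (by omega)
  have hK1 : (0:ℝ) < K + 1 := by positivity
  have hKN : K + 1 < N := by rw [hNdef, hKdef]; exact_mod_cast hkn
  have hd1 : (0:ℝ) < N - (K+1) := by linarith
  have hB0 : (∑ i : Fin n, if (i:ℕ) ≤ k then ((i:ℕ):ℝ)/N else 0) = (K+1)*K/(2*N) := by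
    rw [Fin.sum_univ_eq_sum_range (fun j => if j ≤ k then ((j:ℕ):ℝ)/N else 0) n]
    rw [← Finset.sum_filter, filter_range_le k n (le_of_lt hkn), ← Finset.sum_div,
      sum_range_cast]
    rw [hKdef]; push_cast; ring
  have hA0 : (∑ i : Fin n, if k < (i:ℕ) then ((i:ℕ):ℝ)/N else 0)
      = (N*(N-1) - (K+1)*K)/(2*N) := by
    have hsplit : ∀ i : Fin n, (if k < (i:ℕ) then ((i:ℕ):ℝ)/N else 0)
        = ((i:ℕ):ℝ)/N - (if (i:ℕ) ≤ k then ((i:ℕ):ℝ)/N else 0) := by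
      intro i; by_cases hp : k < (i:ℕ)
      · rw [if_pos hp, if_neg (by omega)]; ring
      · rw [if_neg hp, if_pos (by omega)]; ring
    rw [Finset.sum_congr rfl (fun i _ => hsplit i), Finset.sum_sub_distrib, hB0]
    rw [Fin.sum_univ_eq_sum_range (fun j => ((j:ℕ):ℝ)/N) n, ← Finset.sum_div, sum_range_cast]
    field_simp
    rw [hNdef]
  have eA := sum_ite_err (fun i : Fin n => k < (i:ℕ)) (sortedTuple f)
    (fun i : Fin n => ((i:ℕ):ℝ)/N) δ h
  have eB := sum_ite_err (fun i : Fin n => (i:ℕ) ≤ k) (sortedTuple f)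
    (fun i : Fin n => ((i:ℕ):ℝ)/N) δ h
  simp only [card_filter_gt k n (by omega), card_filter_le k n (by omega)] at eA eB
  rw [hA0] at eA
  rw [hB0] at eB
  have hcast : ((n - (k+1) : ℕ) : ℝ) = N - (K+1) := by
    rw [Nat.cast_sub hkn.le, hNdef, hKdef]; push_cast; ring
  rw [hcast] at eA
  have hcast2 : ((k + 1 : ℕ) : ℝ) = K + 1 := by rw [hKdef]; push_cast; ring
  rw [hcast2] at eB
  set A := (∑ i : Fin n, if k < (i:ℕ) then sortedTuple f i else 0) with hAdef
  set B := (∑ i : Fin n, if (i:ℕ) ≤ k then sortedTuple f i else 0) with hBdef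
  have key : A/(N-(K+1)) - B/(K+1) - 1/2
      = (A - (N*(N-1) - (K+1)*K)/(2*N))/(N-(K+1)) - (B - (K+1)*K/(2*N))/(K+1) := by
    field_simp
    ring
  have hgoal : |A/(N-(K+1)) - B/(K+1) - 1/2| ≤ 2*δ := by
    rw [key]
    have tri : ∀ x y : ℝ, |x - y| ≤ |x| + |y| := fun x y => by
      calc |x - y| = |x + (-y)| := by ring_nf
        _ ≤ |x| + |-y| := abs_add_le _ _
        _ = |x| + |y| := by rw [abs_neg]
    refine le_trans (tri _ _) ?_
    rw [abs_div, abs_div, abs_of_pos hd1, abs_of_pos hK1]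
    have h1 : |A - (N*(N-1) - (K+1)*K)/(2*N)|/(N-(K+1)) ≤ δ := by
      rw [div_le_iff₀ hd1]; linarith [eA]
    have h2 : |B - (K+1)*K/(2*N)|/(K+1) ≤ δ := by
      rw [div_le_iff₀ hK1]; linarith [eB]
    linarith
  convert hgoal using 3 <;> push_cast <;> ring

lemma epsHigh_bound {n : ℕ} (hn : 2 ≤ n) (f : Fin n → ℝ) {δ : ℝ}
    (h : ∀ i : Fin n, |sortedTuple f i - ((i:ℕ):ℝ)/(n:ℝ)| ≤ δ) :
    |epsHigh f - 1/2| ≤ 2*δ := by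
  have hne : Nonempty (Fin (n-1)) := ⟨⟨0, by omega⟩⟩
  set T : Fin (n-1) → ℝ := fun kk =>
    ((∑ i : Fin n, if (kk : ℕ) < (i : ℕ) then sortedTuple f i else 0) /
        ((n : ℝ) - ((kk : ℕ) + 1)) -
     (∑ i : Fin n, if (i : ℕ) ≤ (kk : ℕ) then sortedTuple f i else 0) /
        (((kk : ℕ) : ℝ) + 1)) with hT
  have hdef : epsHigh f = ⨆ kk : Fin (n-1), T kk := rfl
  have hb : ∀ kk, |T kk - 1/2| ≤ 2*δ := fun kk => term_bound hn f h kk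
  have h1 : epsHigh f ≤ 1/2 + 2*δ := by
    rw [hdef]
    exact ciSup_le (fun kk => by have := abs_le.1 (hb kk); linarith [this.2])
  have h2 : 1/2 - 2*δ ≤ epsHigh f := by
    rw [hdef]
    refine le_trans ?_ (le_ciSup (Set.finite_range T).bddAbove (Classical.arbitrary _))
    have := abs_le.1 (hb (Classical.arbitrary _))
    linarith [this.1]
  rw [abs_le]
  constructor <;> linarith

lemma sum_indicator_eq_card (w : ℕ → ℝ) (t : ℝ) (n : ℕ) :
    (∑ i ∈ range n, Set.indicator (Set.Iic t) (fun _ => (1:ℝ)) (w i))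
      = ((univ.filter (fun i : Fin n => w i ≤ t)).card : ℝ) := by
  rw [← Fin.sum_univ_eq_sum_range (fun i => Set.indicator (Set.Iic t) (fun _ => (1:ℝ)) (w i)) n]
  have h : ∀ i : Fin n, Set.indicator (Set.Iic t) (fun _ => (1:ℝ)) (w i)
      = if w i ≤ t then 1 else 0 := by
    intro i; simp [Set.indicator_apply, Set.mem_Iic]
  rw [Finset.sum_congr rfl (fun i _ => h i), Finset.sum_boole]

lemma lln_count {Ω : Type*} [MeasurableSpace Ω] (P : Measure Ω) [IsProbabilityMeasure P]
    (U : ℕ → Ω → ℝ) (hmeas : ∀ i, Measurable (U i))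
    (hindep : iIndepFun U P)
    (hunif : ∀ i, Measure.map (U i) P = volume.restrict (Set.Icc (0 : ℝ) 1))
    (t : ℝ) (ht : t ∈ Set.Icc (0:ℝ) 1) :
    ∀ᵐ ω ∂P, Tendsto
      (fun n : ℕ => ((univ.filter (fun i : Fin n => U i ω ≤ t)).card : ℝ)/(n:ℝ))
      atTop (𝓝 t) := by
  set g : ℝ → ℝ := Set.indicator (Set.Iic t) (fun _ => (1:ℝ)) with hg
  have hgmeas : Measurable g := measurable_const.indicator measurableSet_Iic
  set X : ℕ → Ω → ℝ := fun i => g ∘ U i with hX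
  have hXmeas : ∀ i, Measurable (X i) := fun i => hgmeas.comp (hmeas i)
  have hbound : ∀ i ω, ‖X i ω‖ ≤ 1 := by
    intro i ω
    simp only [hX, hg, Function.comp_apply, Set.indicator_apply]
    split_ifs <;> simp
  have hint : Integrable (X 0) P := by
    refine (integrable_const (1:ℝ)).mono' (hXmeas 0).aestronglyMeasurable ?_
    exact ae_of_all _ (fun ω => hbound 0 ω)
  have hindep' : Pairwise (Function.onFun (IndepFun · · P) X) := by
    intro i j hij
    exact (hindep.indepFun hij).comp hgmeas hgmeas
  have hident : ∀ i, IdentDistrib (X i) (X 0) P P := by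
    intro i
    have hU : IdentDistrib (U i) (U 0) P P :=
      ⟨(hmeas i).aemeasurable, (hmeas 0).aemeasurable, by rw [hunif i, hunif 0]⟩
    exact hU.comp hgmeas
  have hmean : P[X 0] = t := by
    have h1 : ∫ ω, X 0 ω ∂P = ∫ x, g x ∂(P.map (U 0)) :=
      (integral_map (hmeas 0).aemeasurable hgmeas.aestronglyMeasurable).symm
    have h2 : Set.Iic t ∩ Set.Icc (0:ℝ) 1 = Set.Icc 0 t := by
      ext x
      simp only [Set.mem_inter_iff, Set.mem_Iic, Set.mem_Icc]
      constructor
      · rintro ⟨h1, h2, h3⟩; exact ⟨h2, h1⟩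
      · rintro ⟨h1, h2⟩; exact ⟨h2, h1, le_trans h2 ht.2⟩
    calc P[X 0] = ∫ x, g x ∂(P.map (U 0)) := h1
      _ = ∫ x, g x ∂(volume.restrict (Set.Icc (0:ℝ) 1)) := by rw [hunif 0]
      _ = ((volume.restrict (Set.Icc (0:ℝ) 1)) (Set.Iic t)).toReal • (1:ℝ) :=
          integral_indicator_const (1:ℝ) measurableSet_Iic
      _ = t := by
          rw [Measure.restrict_apply measurableSet_Iic, h2, Real.volume_Icc]
          simp [ENNReal.toReal_ofReal ht.1]
  have hlln := strong_law_ae_real X hint hindep' hident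
  rw [hmean] at hlln
  filter_upwards [hlln] with ω hω
  apply hω.congr
  intro n
  congr 1
  exact sum_indicator_eq_card (fun i => U i ω) t n

lemma measurable_card {Ω : Type*} [MeasurableSpace Ω] (U : ℕ → Ω → ℝ)
    (hmeas : ∀ i, Measurable (U i)) (n : ℕ) (t : ℝ) :
    Measurable (fun ω => (univ.filter (fun i : Fin n => U i ω ≤ t)).card) := by
  have h : (fun ω => (univ.filter (fun i : Fin n => U i ω ≤ t)).card)
      = fun ω => ∑ i : Fin n, if U i ω ≤ t then 1 else 0 := by
    funext ω; rw [Finset.card_filter]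
  rw [h]
  apply Finset.measurable_sum
  intro i _
  exact Measurable.ite (measurableSet_le (hmeas i) measurable_const)
    measurable_const measurable_const

lemma measurable_sorted {Ω : Type*} [MeasurableSpace Ω] (U : ℕ → Ω → ℝ)
    (hmeas : ∀ i, Measurable (U i)) (n : ℕ) (j : Fin n) :
    Measurable (fun ω => sortedTuple (fun i : Fin n => U i ω) j) := by
  apply measurable_of_Iic
  intro t
  have hset : (fun ω => sortedTuple (fun i : Fin n => U i ω) j) ⁻¹' Set.Iic t
      = {ω | (j:ℕ) < (univ.filter (fun i : Fin n => U i ω ≤ t)).card} := by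
    ext ω
    simp only [Set.mem_preimage, Set.mem_Iic, Set.mem_setOf_eq]
    rw [monotone_le_iff_card (sortedTuple_monotone _) j t, card_sorted_le]
  rw [hset]
  exact measurableSet_lt measurable_const (measurable_card U hmeas n t)

lemma measurable_epsHigh {Ω : Type*} [MeasurableSpace Ω] (U : ℕ → Ω → ℝ)
    (hmeas : ∀ i, Measurable (U i)) (n : ℕ) :
    Measurable (fun ω => epsHigh (fun i : Fin n => U i ω)) := by
  unfold epsHigh
  apply Measurable.iSup
  intro kk
  apply Measurable.sub
  · apply Measurable.div_const
    apply Finset.measurable_sum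
    intro i _
    by_cases h : (kk : ℕ) < (i : ℕ)
    · simpa [h] using measurable_sorted U hmeas n i
    · simp [h]
  · apply Measurable.div_const
    apply Finset.measurable_sum
    intro i _
    by_cases h : (i : ℕ) ≤ (kk : ℕ)
    · simpa [h] using measurable_sorted U hmeas n i
    · simp [h]

/-- for `n` i.i.d. uniform opinions on `[0,1]`, the threshold
`ε_high = max_k (upper-group mean − lower-group mean)` converges to `1/2`
in probability as `n → ∞`. -/
theorem epsHigh_tendsto_half_in_probability {Ω : Type*} [MeasurableSpace Ω]
    (P : Measure Ω) [IsProbabilityMeasure P]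
    (U : ℕ → Ω → ℝ)
    (hmeas : ∀ i, Measurable (U i))
    (hindep : iIndepFun U P)
    (hunif : ∀ i, Measure.map (U i) P = volume.restrict (Set.Icc (0 : ℝ) 1)) :
    TendstoInMeasure P (fun (n : ℕ) (ω : Ω) => epsHigh (fun i : Fin n => U i ω))
      atTop (fun _ => 1 / 2) := by
  have hbound_ae : ∀ᵐ ω ∂P, ∀ i, U i ω ∈ Set.Icc (0:ℝ) 1 := by
    rw [MeasureTheory.ae_all_iff]
    intro i
    have hpre : P (U i ⁻¹' (Set.Icc (0:ℝ) 1)) = 1 := by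
      have h1 : (P.map (U i)) (Set.Icc (0:ℝ) 1) = 1 := by
        rw [hunif i, Measure.restrict_apply measurableSet_Icc]
        simp [Real.volume_Icc]
      rwa [Measure.map_apply (hmeas i) measurableSet_Icc] at h1
    rw [MeasureTheory.ae_iff]
    have hset : {ω | ¬ U i ω ∈ Set.Icc (0:ℝ) 1} = (U i ⁻¹' Set.Icc (0:ℝ) 1)ᶜ := rfl
    rw [hset, measure_compl ((hmeas i) measurableSet_Icc) (measure_ne_top _ _), hpre]
    simp
  have hcnt_ae : ∀ᵐ ω ∂P, ∀ m : ℕ, ∀ j : ℕ, 1 ≤ m → j ≤ m →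
      Tendsto (fun n : ℕ =>
        ((Finset.univ.filter (fun i : Fin n => U i ω ≤ (j:ℝ)/(m:ℝ))).card : ℝ)/(n:ℝ))
        atTop (nhds ((j:ℝ)/(m:ℝ))) := by
    rw [MeasureTheory.ae_all_iff]
    intro m
    rw [MeasureTheory.ae_all_iff]
    intro j
    by_cases hmj : 1 ≤ m ∧ j ≤ m
    · have hmpos : (0:ℝ) < m := by exact_mod_cast hmj.1
      have ht : (j:ℝ)/(m:ℝ) ∈ Set.Icc (0:ℝ) 1 := by
        constructor
        · positivity
        · rw [div_le_one hmpos]; exact_mod_cast hmj.2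
      filter_upwards [lln_count P U hmeas hindep hunif _ ht] with ω hω
      intro _ _
      exact hω
    · apply Filter.Eventually.of_forall
      intro ω h1 h2
      exact absurd ⟨h1, h2⟩ hmj
  apply tendstoInMeasure_of_tendsto_ae
  · intro n
    exact (measurable_epsHigh U hmeas n).aestronglyMeasurable
  · filter_upwards [hbound_ae, hcnt_ae] with ω hA hB
    rw [Metric.tendsto_atTop]
    intro ε hε
    set m : ℕ := ⌈(9:ℝ)/ε⌉₊ + 1 with hm
    have hm1 : 1 ≤ m := by omega
    have hmpos : (0:ℝ) < m := by exact_mod_cast hm1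
    have hmε : 8/(m:ℝ) < ε := by
      have h9 : (9:ℝ)/ε < m := by
        have := Nat.le_ceil ((9:ℝ)/ε)
        rw [hm]
        push_cast
        linarith
      rw [div_lt_iff₀ hmpos]
      have h2 := (div_lt_iff₀ hε).mp h9
      linarith
    have hev1 : ∀ᶠ n : ℕ in atTop, 2 ≤ n := eventually_ge_atTop 2
    have hev2 : ∀ᶠ n : ℕ in atTop, ∀ j ∈ Finset.range (m+1),
        |((Finset.univ.filter (fun i : Fin n => U i ω ≤ (j:ℝ)/(m:ℝ))).card : ℝ)/(n:ℝ)
          - (j:ℝ)/(m:ℝ)| ≤ 1/(m:ℝ) := by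
      rw [Filter.eventually_all_finset]
      intro j hj
      have hj' : j ≤ m := by
        rw [Finset.mem_range] at hj; omega
      have htd := hB m j hm1 hj'
      obtain ⟨N, hN⟩ := Metric.tendsto_atTop.mp htd (1/(m:ℝ)) (by positivity)
      rw [Filter.eventually_atTop]
      refine ⟨N, fun n hn => ?_⟩
      have := hN n hn
      rw [Real.dist_eq] at this
      linarith
    obtain ⟨N, hN⟩ := Filter.eventually_atTop.mp (hev1.and hev2)
    refine ⟨N, fun n hn => ?_⟩
    obtain ⟨hn2, hcnt⟩ := hN n hn
    have hsand := sandwich hm1 (fun i : Fin n => U i ω) (fun i => hA i)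
      (fun j hj => hcnt j (Finset.mem_range.mpr (by omega)))
    have hfin := epsHigh_bound hn2 (fun i : Fin n => U i ω) hsand
    rw [Real.dist_eq]
    have h8 : 2*(4/(m:ℝ)) = 8/(m:ℝ) := by ring
    calc |epsHigh (fun i : Fin n => U i ω) - 1/2| ≤ 2*(4/(m:ℝ)) := hfin
      _ = 8/(m:ℝ) := h8
      _ < ε := hmε
end
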